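/- If S ⊆ ℝ³ is an objective atomic structure (i.e., for each i there exists an orthogonal Qᵢ with {Qᵢ(xⱼ − x₁) + xᵢ : j} = S), then S equals the orbit of the point x₁ under the isometry group of S (the group of all isometries g with g(S) = S). -/

import Mathlib

noncomputable section

abbrev E3 := EuclideanSpace ℝ (Fin 3)

/-- If `S ⊆ ℝ³` is an objective atomic structure (for each `x ∈ S` there is an
orthogonal `Q` with `{Q(y − x₁) + x : y ∈ S} = S`), then `S` equals the orbit
of `x₁` under the isometry group of `S` (all isometries `g` with `g(S) = S`). -/
theorem objective_structure_eq_orbit (S : Set E3) (x₁ : E3) (hx₁ : x₁ ∈ S)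
    (hobj : ∀ x ∈ S, ∃ Q : E3 ≃ₗᵢ[ℝ] E3, (fun y => Q (y - x₁) + x) '' S = S) :
    S = {y : E3 | ∃ g : E3 ≃ᵢ E3, g '' S = S ∧ g x₁ = y} := by
  ext y
  constructor
  · intro hy
    obtain ⟨Q, hQ⟩ := hobj y hy
    refine ⟨((IsometryEquiv.subRight x₁).trans Q.toIsometryEquiv).trans
      (IsometryEquiv.addRight y), ?_, ?_⟩
    · exact hQ
    · simp
  · rintro ⟨g, hg, rfl⟩
    rw [← hg]
    exact ⟨x₁, hx₁, rfl⟩
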